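/- For all real numbers X, Y, Z with 0 < X < 1, 0 < Y < 1, 0 < Z < 1, if 18 + X*Y^3*Z^6 + 2*X*Y^3 - 3*X*Y - 18*Y < 0, then 18 + X*Y^3*Z^6 + 2*X*Y^3 + 9*X*Y - 12*X - 18*Y < 0. -/
import Mathlib

theorem stmt0 : ∀ X Y Z : ℝ, 0 < X → X < 1 → 0 < Y → Y < 1 → 0 < Z → Z < 1 →
    18 + X*Y^3*Z^6 + 2*X*Y^3 - 3*X*Y - 18*Y < 0 →
    18 + X*Y^3*Z^6 + 2*X*Y^3 + 9*X*Y - 12*X - 18*Y < 0 := by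
  intro X Y Z hX hX1 hY hY1 hZ hZ1 h
  nlinarith [mul_pos hX (sub_pos.mpr hY1)]
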